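/- Suppose ρ : ℕ⁺ → K is a weight function and f(x) ∈ K[[x]] with f(0) = 0 satisfies Σ_{n≥1} (Σ_{T ∈ PT(n)} ∏_{v ∈ T} ρ(h_v)) x^n = f(x), where PT(n) is the set of plane trees with n vertices. Then for all n ≥ 1 with [x^{n-1}](1/(1-f(x))) ≠ 0, ρ(n) = [x^n]f(x) / [x^{n-1}](1/(1-f(x))). -/

import Mathlib

/-- Plane trees: nonempty rooted trees whose subtrees at each vertex are linearly ordered. -/
inductive PTree : Type
  | node : List PTree → PTree

namespace PTree

mutual
/-- The number of vertices of a plane tree. -/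
def size : PTree → ℕ
  | .node cs => sizeList cs + 1
/-- The total number of vertices of a plane forest (a list of plane trees). -/
def sizeList : List PTree → ℕ
  | [] => 0
  | t :: ts => size t + sizeList ts
end

mutual
/-- The multiset of hook lengths of a plane tree: the hook length of a vertex
is the number of its descendants, counting the vertex itself. -/
def hooks : PTree → Multiset ℕ+
  | .node cs => ⟨sizeList cs + 1, Nat.succ_pos _⟩ ::ₘ hooksList cs
/-- The multiset of hook lengths of a plane forest. -/
def hooksList : List PTree → Multiset ℕ+
  | [] => 0
  | t :: ts => hooks t + hooksList ts
end

end PTree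


section Aux
variable {K : Type*} [Field K] (ρ : ℕ+ → K)

noncomputable def w (ρ : ℕ+ → K) (t : PTree) : K := (t.hooks.map ρ).prod
noncomputable def wl (ρ : ℕ+ → K) (l : List PTree) : K := (PTree.hooksList l |>.map ρ).prod

lemma wl_nil : wl ρ ([] : List PTree) = 1 := by simp [wl, PTree.hooksList]

lemma wl_cons (t : PTree) (ts : List PTree) : wl ρ (t :: ts) = w ρ t * wl ρ ts := by
  simp [wl, w, PTree.hooksList]

lemma w_node (cs : List PTree) :
    w ρ (.node cs) = ρ ⟨PTree.sizeList cs + 1, Nat.succ_pos _⟩ * wl ρ cs := by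
  simp only [w, wl, PTree.hooks]
  exact (congrArg Multiset.prod (Multiset.map_cons ρ _ _)).trans (Multiset.prod_cons _ _)

lemma size_pos (t : PTree) : 1 ≤ t.size := by
  cases t with
  | node cs => simp [PTree.size]

lemma sizeList_eq_zero {l : List PTree} (h : PTree.sizeList l = 0) : l = [] := by
  cases l with
  | nil => rfl
  | cons t ts =>
    exfalso
    have := size_pos t
    simp [PTree.sizeList] at h
    omega

def treeEquiv (n : ℕ) : {t : PTree // t.size = n + 1} ≃ {l : List PTree // PTree.sizeList l = n} where
  toFun := fun ⟨t, h⟩ => match t, h with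
    | .node cs, h => ⟨cs, by simpa [PTree.size] using h⟩
  invFun := fun ⟨cs, h⟩ => ⟨.node cs, by simp [PTree.size, h]⟩
  left_inv := fun ⟨t, h⟩ => by cases t; rfl
  right_inv := fun ⟨cs, h⟩ => rfl

def forestEquiv (n : ℕ) : {l : List PTree // PTree.sizeList l = n + 1} ≃
    Σ j : Fin (n + 1), {t : PTree // t.size = j + 1} × {l : List PTree // PTree.sizeList l = n - j} where
  toFun := fun ⟨l, h⟩ => match l, h with
    | [], h => absurd h (by simp [PTree.sizeList])
    | t :: ts, h => by
        have hs : PTree.size t + PTree.sizeList ts = n + 1 := by simpa [PTree.sizeList] using h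
        have h1 := size_pos t
        exact ⟨⟨t.size - 1, by omega⟩, ⟨t, by simp only [Fin.val_mk]; omega⟩, ⟨ts, by simp only [Fin.val_mk]; omega⟩⟩
  invFun := fun ⟨j, ⟨t, ht⟩, ⟨ts, hts⟩⟩ =>
    ⟨t :: ts, by
      have := j.isLt
      simp only [PTree.sizeList, ht, hts]; omega⟩
  left_inv := fun ⟨l, h⟩ => by
    match l, h with
    | t :: ts, h => rfl
  right_inv := fun ⟨j, ⟨t, ht⟩, ⟨ts, hts⟩⟩ => by
    rcases j with ⟨jv, hjv⟩
    simp only [Fin.val_mk] at ht hts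
    have hj : t.size - 1 = jv := by omega
    subst hj
    rfl

lemma finite_forest : ∀ n : ℕ, Finite {l : List PTree // PTree.sizeList l = n} := by
  intro n
  induction n using Nat.strong_induction_on with
  | _ n ih =>
    match n with
    | 0 =>
      have : Subsingleton {l : List PTree // PTree.sizeList l = 0} := by
        constructor
        rintro ⟨a, ha⟩ ⟨b, hb⟩
        simp [sizeList_eq_zero ha, sizeList_eq_zero hb]
      exact Finite.of_subsingleton
    | (m + 1) =>
      have : ∀ j : Fin (m + 1), Finite ({t : PTree // t.size = j + 1} × {l : List PTree // PTree.sizeList l = m - j}) := by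
        intro j
        have h1 : Finite {l : List PTree // PTree.sizeList l = (j : ℕ)} := ih j (by omega)
        have h2 : Finite {l : List PTree // PTree.sizeList l = m - j} := ih (m - j) (by omega)
        have h3 : Finite {t : PTree // t.size = j + 1} := Finite.of_equiv _ (treeEquiv j).symm
        exact Finite.instProd
      exact Finite.of_equiv _ (forestEquiv m).symm

lemma finite_tree (n : ℕ) : Finite {t : PTree // t.size = n} := by
  match n with
  | 0 =>
    have : IsEmpty {t : PTree // t.size = 0} := by
      constructor; rintro ⟨t, ht⟩; have := size_pos t; omega
    infer_instance
  | (m + 1) =>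
    have := finite_forest m
    exact Finite.of_equiv _ (treeEquiv m).symm

end Aux

section Main
variable {K : Type*} [Field K] (ρ : ℕ+ → K)

noncomputable def gser (ρ : ℕ+ → K) : PowerSeries K :=
  PowerSeries.mk fun k => ∑ᶠ l : {l : List PTree // PTree.sizeList l = k}, wl ρ (l : List PTree)

lemma coeff_gser (k : ℕ) : PowerSeries.coeff k (gser ρ) =
    ∑ᶠ l : {l : List PTree // PTree.sizeList l = k}, wl ρ (l : List PTree) :=
  PowerSeries.coeff_mk _ _

lemma coeff_gser_zero : PowerSeries.coeff 0 (gser ρ) = 1 := by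
  rw [coeff_gser]
  letI : Unique {l : List PTree // PTree.sizeList l = 0} :=
    ⟨⟨⟨[], rfl⟩⟩, fun ⟨l, hl⟩ => by simp [sizeList_eq_zero hl]⟩
  rw [finsum_unique]
  show wl ρ ([] : List PTree) = 1
  exact wl_nil ρ

lemma sum_tree_eq (m : ℕ) :
    (∑ᶠ T : {t : PTree // t.size = m + 1}, w ρ (T : PTree)) =
      ρ ⟨m + 1, Nat.succ_pos m⟩ *
        ∑ᶠ l : {l : List PTree // PTree.sizeList l = m}, wl ρ (l : List PTree) := by
  haveI := finite_tree (m + 1)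
  haveI := finite_forest m
  letI : Fintype {t : PTree // t.size = m + 1} := Fintype.ofFinite _
  letI : Fintype {l : List PTree // PTree.sizeList l = m} := Fintype.ofFinite _
  rw [finsum_eq_sum_of_fintype, finsum_eq_sum_of_fintype, Finset.mul_sum]
  refine Fintype.sum_equiv (treeEquiv m) _ _ ?_
  rintro ⟨t, ht⟩
  cases t with
  | node cs =>
    have hcs : PTree.sizeList cs = m := by simpa [PTree.size] using ht
    have : (⟨PTree.sizeList cs + 1, Nat.succ_pos _⟩ : ℕ+) = ⟨m + 1, Nat.succ_pos m⟩ := by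
      ext; simp [hcs]
    simp [treeEquiv, w_node, this]

lemma sum_forest_succ (m : ℕ) :
    (∑ᶠ l : {l : List PTree // PTree.sizeList l = m + 1}, wl ρ (l : List PTree)) =
      ∑ j : Fin (m + 1),
        (∑ᶠ T : {t : PTree // t.size = (j : ℕ) + 1}, w ρ (T : PTree)) *
          (∑ᶠ l : {l : List PTree // PTree.sizeList l = m - (j : ℕ)}, wl ρ (l : List PTree)) := by
  haveI := finite_forest (m + 1)
  haveI : ∀ j : ℕ, Finite {t : PTree // t.size = j + 1} :=
    fun j => finite_tree (j + 1)
  haveI := fun j : ℕ => finite_forest j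
  letI : Fintype {l : List PTree // PTree.sizeList l = m + 1} := Fintype.ofFinite _
  letI : ∀ j : ℕ, Fintype {t : PTree // t.size = j + 1} := fun j => Fintype.ofFinite _
  letI : ∀ j : ℕ, Fintype {l : List PTree // PTree.sizeList l = j} := fun j => Fintype.ofFinite _
  simp only [finsum_eq_sum_of_fintype]
  rw [Fintype.sum_equiv (forestEquiv m)
    (fun l => wl ρ (l : List PTree))
    (fun x => w ρ (x.2.1 : PTree) * wl ρ (x.2.2 : List PTree)) ?_]
  · rw [← Finset.univ_sigma_univ, Finset.sum_sigma]
    refine Finset.sum_congr rfl fun j _ => ?_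
    rw [Fintype.sum_prod_type, Finset.sum_mul]
    refine Finset.sum_congr rfl fun t _ => ?_
    rw [Finset.mul_sum]
  · rintro ⟨l, hl⟩
    match l, hl with
    | t :: ts, hl => exact wl_cons ρ t ts

end Main


/-- The expansion formula for plane trees. -/
theorem expansion_formula_plane_trees {K : Type*} [Field K] (ρ : ℕ+ → K)
    (f : PowerSeries K) (h0 : PowerSeries.constantCoeff f = 0)
    (hf : ∀ n : ℕ, 1 ≤ n → PowerSeries.coeff n f =
      ∑ᶠ T : {t : PTree // t.size = n}, ((T : PTree).hooks.map fun h => ρ h).prod)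
    (n : ℕ+) (hne : PowerSeries.coeff ((n : ℕ) - 1) (1 - f)⁻¹ ≠ 0) :
    ρ n = PowerSeries.coeff (n : ℕ) f /
      PowerSeries.coeff ((n : ℕ) - 1) (1 - f)⁻¹ := by

  have hw : ∀ m : ℕ, 1 ≤ m → PowerSeries.coeff m f =
      ∑ᶠ T : {t : PTree // t.size = m}, w ρ (T : PTree) := by
    intro m hm
    rw [hf m hm]; rfl
  have hmul : (1 - f) * gser ρ = 1 := by
    have hg : gser ρ = 1 + f * gser ρ := by
      ext k
      rcases k with _ | m
      · simp [coeff_gser_zero, h0, PowerSeries.coeff_zero_eq_constantCoeff]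
      · rw [coeff_gser, sum_forest_succ, map_add, PowerSeries.coeff_mul,
          Finset.Nat.sum_antidiagonal_eq_sum_range_succ_mk, Finset.sum_range_succ']
        have h1 : PowerSeries.coeff (m + 1) (1 : PowerSeries K) = 0 := by
          rw [PowerSeries.coeff_one]; simp
        have h2 : PowerSeries.coeff ((0, m + 1 - 0).1) f = 0 := by
          simpa [PowerSeries.coeff_zero_eq_constantCoeff] using h0
        rw [h1, h2, zero_mul, add_zero, zero_add,
          Fin.sum_univ_eq_sum_range (fun k =>
            (∑ᶠ T : {t : PTree // t.size = k + 1}, w ρ (T : PTree)) *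
              ∑ᶠ l : {l : List PTree // PTree.sizeList l = m - k}, wl ρ (l : List PTree)) (m + 1)]
        refine Finset.sum_congr rfl fun k hk => ?_
        rw [Finset.mem_range] at hk
        have hmk : m + 1 - (k + 1) = m - k := by omega
        simp only [hmk]
        rw [hw (k + 1) (by omega), coeff_gser]
    linear_combination hg
  have hinv : (1 - f)⁻¹ = gser ρ := by
    rw [PowerSeries.inv_eq_iff_mul_eq_one (by simp [h0]), mul_comm]
    exact hmul
  have key : PowerSeries.coeff (n : ℕ) f =
      ρ n * PowerSeries.coeff ((n : ℕ) - 1) (1 - f)⁻¹ := by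
    rw [hinv, coeff_gser, hw _ n.pos]
    obtain ⟨m, hm⟩ : ∃ m, (n : ℕ) = m + 1 := ⟨(n : ℕ) - 1, by have := n.pos; omega⟩
    have hρ : ρ ⟨m + 1, Nat.succ_pos m⟩ = ρ n := by
      congr 1
      exact PNat.eq hm.symm
    rw [hm, Nat.add_sub_cancel, sum_tree_eq, hρ]
  rw [key, mul_div_assoc, div_self hne, mul_one]
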